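/- For n ≥ 1, let G be the caterpillar gadget with degree-5 vertices p_1, p_2, …, p_n. Then G has exactly one F-compatible orientation that contains the arc (r, p_n). -/

import Mathlib

/-!
Common definitions: rooted (pseudo/phylogenetic) networks represented as arc
relations `D : V → V → Prop` on a vertex type `V`, with in/out-degrees measured
by `Set.ncard`, together with the orientation notions (Variant A, Variant B,
orientations of connector networks) from the paper.
-/

section Prelude

universe u
variable {V : Type u}

/-- In-degree of `v` in the digraph with arc relation `D`. -/
noncomputable def inDeg (D : V → V → Prop) (v : V) : ℕ := Set.ncard {u | D u v}

/-- Out-degree of `v` in the digraph with arc relation `D`. -/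
noncomputable def outDeg (D : V → V → Prop) (v : V) : ℕ := Set.ncard {u | D v u}

/-- A digraph is acyclic if it has no directed cycle. -/
def Acyclic (D : V → V → Prop) : Prop := ∀ v, ¬ Relation.TransGen D v v

/-- A tree vertex: in-degree 1 and out-degree at least 1. -/
def IsTreeVertex (D : V → V → Prop) (v : V) : Prop := inDeg D v = 1 ∧ 1 ≤ outDeg D v

/-- A leaf (sink) of a digraph. -/
def IsLeafVertex (D : V → V → Prop) (v : V) : Prop := outDeg D v = 0

/-- Tree-child: every non-leaf vertex has a child that is a tree vertex or a leaf. -/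
def TreeChild (D : V → V → Prop) : Prop :=
  ∀ v, ¬ IsLeafVertex D v → ∃ u, D v u ∧ (IsTreeVertex D u ∨ IsLeafVertex D u)

/-- Funneled: every reticulation (in-degree at least 2) has out-degree 1. -/
def Funneled (D : V → V → Prop) : Prop := ∀ v, 2 ≤ inDeg D v → outDeg D v = 1

/-- An arc `(a,b)` is a shortcut if there is another directed path from `a` to `b`. -/
def IsShortcut (D : V → V → Prop) (a b : V) : Prop :=
  D a b ∧ ∃ c, D a c ∧ Relation.TransGen D c b

/-- Normal: tree-child and without shortcuts. -/
def NormalNet (D : V → V → Prop) : Prop := TreeChild D ∧ ∀ a b, ¬ IsShortcut D a b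

/-- `D` is a rooted pseudo network with root `ρ` whose set of leaves is `X`
(leaves are labelled by themselves). -/
def IsRootedPseudoNetwork (D : V → V → Prop) (ρ : V) (X : Set V) : Prop :=
  Acyclic D ∧ (∀ v, ¬ D v v) ∧
  inDeg D ρ = 0 ∧ 1 ≤ outDeg D ρ ∧
  (∀ v, inDeg D v = 0 → v = ρ) ∧
  (∀ v, outDeg D v = 0 → inDeg D v = 1) ∧
  {v | outDeg D v = 0} = X ∧
  (∀ v, v ≠ ρ → outDeg D v ≠ 0 → 1 ≤ inDeg D v ∧ 1 ≤ outDeg D v)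

/-- `D` is a rooted phylogenetic network with root `ρ` and leaf set `X`:
additionally every internal vertex has in-degree 1 and out-degree ≥ 2, or
in-degree ≥ 2 and out-degree ≥ 1. -/
def IsRootedPhyloNetwork (D : V → V → Prop) (ρ : V) (X : Set V) : Prop :=
  Acyclic D ∧ (∀ v, ¬ D v v) ∧
  inDeg D ρ = 0 ∧ 1 ≤ outDeg D ρ ∧
  (∀ v, inDeg D v = 0 → v = ρ) ∧
  (∀ v, outDeg D v = 0 → inDeg D v = 1) ∧
  {v | outDeg D v = 0} = X ∧
  (∀ v, v ≠ ρ → outDeg D v ≠ 0 →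
    (inDeg D v = 1 ∧ 2 ≤ outDeg D v) ∨ (2 ≤ inDeg D v ∧ 1 ≤ outDeg D v))

/-- `{u,w} = {a,b}` as unordered pairs. -/
def SamePair (u w a b : V) : Prop := (u = a ∧ w = b) ∨ (u = b ∧ w = a)

/-- A Variant-A orientation of the undirected graph `adj` obtained by
subdividing the edge `{a,b}` with a new root vertex `none` and directing all
edges; `D` is the resulting arc relation on `Option V` (the root is `none`). -/
def VariantA (adj : V → V → Prop) (a b : V) (D : Option V → Option V → Prop) : Prop :=
  adj a b ∧
  D none (some a) ∧ D none (some b) ∧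
  (∀ o, ¬ D o none) ∧
  (∀ u, D none (some u) → u = a ∨ u = b) ∧
  (∀ u w : V, D (some u) (some w) → adj u w ∧ ¬ SamePair u w a b) ∧
  (∀ u w : V, adj u w → ¬ SamePair u w a b → (D (some u) (some w) ↔ ¬ D (some w) (some u)))

/-- `D` assigns to each edge of `adj` exactly one direction (used for
Variant-B orientations and for orientations of connector networks). -/
def IsOrientation (adj D : V → V → Prop) : Prop :=
  (∀ a b, D a b → adj a b) ∧ (∀ a b, adj a b → (D a b ↔ ¬ D b a))

/-- An orientation of a connector network with labelled leaves `L` and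
connector leaves `Uc` that is acyclic, in which every labelled leaf has
out-degree 0 and every vertex not in `L ∪ Uc` has in-degree ≥ 1 and
out-degree ≥ 1 (the standing hypotheses for the compatibility notions). -/
def GoodOrientation (adj D : V → V → Prop) (L Uc : Set V) : Prop :=
  IsOrientation adj D ∧ Acyclic D ∧ (∀ v ∈ L, outDeg D v = 0) ∧
  (∀ v, v ∉ L ∪ Uc → 1 ≤ inDeg D v ∧ 1 ≤ outDeg D v)

/-- F-compatible: every vertex of in-degree at least 2 has out-degree 1. -/
def FCompatible (D : V → V → Prop) : Prop := ∀ v, 2 ≤ inDeg D v → outDeg D v = 1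

/-- TC-compatible orientation of a connector network. -/
def TCCompatible (D : V → V → Prop) (L Uc : Set V) : Prop :=
  ∀ v, v ∉ L ∪ Uc → ∃ u, D v u ∧ (u ∈ L ∪ Uc ∨ (inDeg D u = 1 ∧ 1 ≤ outDeg D u))

/-- Strongly TC-compatible orientation of a connector network. -/
def StrongTCCompatible (D : V → V → Prop) (L Uc : Set V) : Prop :=
  ∀ v, v ∉ L ∪ Uc → ∃ u, D v u ∧ (u ∈ L ∨ (inDeg D u = 1 ∧ 1 ≤ outDeg D u))

end Prelude

namespace PaperFormalization

/-- Vertices of the caterpillar gadget with `n` internal degree-5 vertices: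
`p i` (for `i : Fin n`, with `p ⟨0,_⟩` playing the role of `p_1` and
`p ⟨n-1,_⟩` the role of `p_n`), connector leaves `r` and `x i`, and labelled
leaves `lf` (pendant at `p_1`) and `li i`, `li' i` (pendant at `p i`). -/
inductive CatV (n : ℕ) : Type
  | p (i : Fin n) | x (i : Fin n) | r | lf | li (i : Fin n) | li' (i : Fin n)

/-- The edges of the caterpillar gadget (one fixed orientation of each edge). -/
def catBase {n : ℕ} : CatV n → CatV n → Prop
  | .p i, .p j => (i : ℕ) + 1 = (j : ℕ)
  | .p i, .r => (i : ℕ) = n - 1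
  | .p i, .x j => i = j
  | .p i, .li j => i = j
  | .p i, .li' j => i = j
  | .p i, .lf => (i : ℕ) = 0
  | _, _ => False

/-- Adjacency relation of the caterpillar gadget. -/
def catAdj {n : ℕ} (a b : CatV n) : Prop := catBase a b ∨ catBase b a

/-- Labelled leaves of the caterpillar gadget. -/
def catL (n : ℕ) : Set (CatV n) :=
  {v | match v with
    | .lf => True
    | .li _ => True
    | .li' _ => True
    | _ => False}

/-- Connector leaves of the caterpillar gadget. -/
def catU (n : ℕ) : Set (CatV n) :=
  {v | match v with
    | .r => True
    | .x _ => True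
    | _ => False}

end PaperFormalization


namespace PaperFormalization

/-- An embedding of the vertices into a finite type, to get finiteness. -/
private def catEmb {n : ℕ} : CatV n → (Fin n ⊕ Fin n ⊕ Fin n ⊕ Fin n ⊕ Bool)
  | .p i => .inl i
  | .x i => .inr (.inl i)
  | .li i => .inr (.inr (.inl i))
  | .li' i => .inr (.inr (.inr (.inl i)))
  | .r => .inr (.inr (.inr (.inr true)))
  | .lf => .inr (.inr (.inr (.inr false)))

instance catFinite {n : ℕ} : Finite (CatV n) := by
  apply Finite.of_injective (catEmb (n := n))
  intro a b hab
  cases a <;> cases b <;> simp_all [catEmb]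

/-- The unique F-compatible orientation containing the arc `(r, p_n)`. -/
def catD {n : ℕ} : CatV n → CatV n → Prop
  | .p j, .p i => (i : ℕ) + 1 = (j : ℕ)
  | .r, .p i => (i : ℕ) = n - 1
  | .p i, .x j => i = j
  | .p i, .li j => i = j
  | .p i, .li' j => i = j
  | .p i, .lf => (i : ℕ) = 0
  | _, _ => False

/-- A rank function decreasing along arcs of `catD`. -/
private def catRank {n : ℕ} : CatV n → ℕ
  | .p i => (i : ℕ) + 1
  | .r => n + 1
  | _ => 0

private lemma catRank_lt {n : ℕ} {a b : CatV n} (h : catD a b) :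
    catRank b < catRank a := by
  cases a <;> cases b <;> simp_all [catD, catRank] <;> omega

private lemma catD_acyclic {n : ℕ} : Acyclic (catD (n := n)) := by
  intro v hv
  have key : ∀ a b : CatV n, Relation.TransGen catD a b → catRank b < catRank a := by
    intro a b h
    induction h with
    | single h => exact catRank_lt h
    | tail _ h ih => exact lt_trans (catRank_lt h) ih
  exact lt_irrefl _ (key v v hv)

private lemma mem_ncard_ge_one {α : Type*} [Finite α] {s : Set α} {a : α} (ha : a ∈ s) :
    1 ≤ s.ncard := (Set.ncard_pos (Set.toFinite s)).mpr ⟨a, ha⟩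

private lemma ncard_le_one_of_eq {α : Type*} [Finite α] {s : Set α}
    (h : ∀ a ∈ s, ∀ b ∈ s, a = b) : s.ncard ≤ 1 :=
  (Set.ncard_le_one (Set.toFinite s)).mpr h

private lemma two_le_ncard {α : Type*} [Finite α] {s : Set α} {a b : α}
    (ha : a ∈ s) (hb : b ∈ s) (hab : a ≠ b) : 2 ≤ s.ncard :=
  (Set.one_lt_ncard (Set.toFinite s)).mpr ⟨a, ha, b, hb, hab⟩

private lemma eq_of_ncard_one {α : Type*} {s : Set α} (h : s.ncard = 1) {u : α}
    (hu : u ∈ s) : ∀ v ∈ s, v = u := by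
  obtain ⟨a, rfl⟩ := Set.ncard_eq_one.mp h
  simp_all

/-- `catD` orients each edge in exactly one direction. -/
private lemma catD_isOrientation {n : ℕ} : IsOrientation catAdj (catD (n := n)) := by
  constructor
  · intro a b h
    cases a <;> cases b <;> simp_all [catD, catAdj, catBase]
  · intro a b h
    cases a <;> cases b <;>
      simp_all [catD, catAdj, catBase, Fin.ext_iff] <;> omega

private lemma catD_inDeg_le_one {n : ℕ} (v : CatV n) : inDeg catD v ≤ 1 := by
  apply ncard_le_one_of_eq
  intro a ha b hb
  simp only [Set.mem_setOf_eq] at ha hb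
  cases v <;> cases a <;> cases b <;>
    simp_all [catD, Fin.ext_iff] <;> omega

private lemma catD_FCompatible {n : ℕ} : FCompatible (catD (n := n)) := by
  intro v hv
  exact absurd (le_trans hv (catD_inDeg_le_one v)) (by omega)

end PaperFormalization

namespace PaperFormalization

/-- Lemma `caterpillar_gadget`, uniqueness part: for `n ≥ 1`
the caterpillar gadget has exactly one F-compatible orientation containing the
arc `(r, p_n)`. -/
theorem caterpillar_unique_F_compatible_orientation (n : ℕ) (hn : 1 ≤ n) :
    ∃! D : CatV n → CatV n → Prop,
      GoodOrientation catAdj D (catL n) (catU n) ∧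
      FCompatible D ∧
      D CatV.r (CatV.p ⟨n - 1, by omega⟩) := by
  refine ⟨catD, ⟨⟨catD_isOrientation, catD_acyclic, ?_, ?_⟩, catD_FCompatible, ?_⟩, ?_⟩
  · -- labelled leaves have out-degree 0
    intro v hv
    unfold outDeg
    rw [Set.ncard_eq_zero (Set.toFinite _)]
    ext u
    cases v <;> cases u <;> simp_all [catD, catL]
  · -- internal vertices have in- and out-degree ≥ 1
    intro v hv
    cases v with
    | p i =>
      constructor
      · by_cases h : (i : ℕ) + 1 < n
        · exact mem_ncard_ge_one (a := CatV.p ⟨(i : ℕ) + 1, h⟩) (by simp [catD])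
        · refine mem_ncard_ge_one (a := CatV.r) ?_
          have := i.isLt
          simp only [Set.mem_setOf_eq, catD]
          omega
      · exact mem_ncard_ge_one (a := CatV.li i) (by simp [catD])
    | x i => exact absurd (by simp [catL, catU]) hv
    | r => exact absurd (by simp [catL, catU]) hv
    | lf => exact absurd (by simp [catL, catU]) hv
    | li i => exact absurd (by simp [catL, catU]) hv
    | li' i => exact absurd (by simp [catL, catU]) hv
  · -- the arc (r, p_n)
    simp [catD]
  · -- uniqueness
    rintro D ⟨⟨⟨hD1, hD2⟩, hAc, hL, hInt⟩, hF, hr⟩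
    -- labelled leaves have no out-arcs
    have hlfout : ∀ v ∈ catL n, ∀ u, ¬ D v u := by
      intro v hv u hu
      have h0 := hL v hv
      unfold outDeg at h0
      rw [Set.ncard_eq_zero (Set.toFinite _)] at h0
      have : u ∈ {w | D v w} := hu
      rw [h0] at this
      exact this
    -- pendant arcs are directed away from the spine
    have hli : ∀ i : Fin n, D (CatV.p i) (CatV.li i) := by
      intro i
      have hadj : catAdj (CatV.p i) (CatV.li i) := Or.inl (by simp [catBase])
      exact (hD2 _ _ hadj).mpr (hlfout _ (by simp [catL]) _)
    have hli' : ∀ i : Fin n, D (CatV.p i) (CatV.li' i) := by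
      intro i
      have hadj : catAdj (CatV.p i) (CatV.li' i) := Or.inl (by simp [catBase])
      exact (hD2 _ _ hadj).mpr (hlfout _ (by simp [catL]) _)
    have hlfarc : ∀ h0 : 0 < n, D (CatV.p ⟨0, h0⟩) CatV.lf := by
      intro h0
      have hadj : catAdj (CatV.p ⟨0, h0⟩) CatV.lf := Or.inl (by simp [catBase])
      exact (hD2 _ _ hadj).mpr (hlfout _ (by simp [catL]) _)
    -- every spine vertex has out-degree ≥ 2, hence in-degree exactly 1
    have hout2 : ∀ i : Fin n, 2 ≤ outDeg D (CatV.p i) := by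
      intro i
      exact two_le_ncard (hli i) (hli' i) (fun h => by cases h)
    have hin1 : ∀ i : Fin n, inDeg D (CatV.p i) = 1 := by
      intro i
      have h1 : 1 ≤ inDeg D (CatV.p i) := (hInt _ (by simp [catL, catU])).1
      have h2 : ¬ 2 ≤ inDeg D (CatV.p i) := by
        intro h
        have h3 := hF _ h
        have h4 := hout2 i
        omega
      omega
    -- the spine arcs, by downward induction
    have spine : ∀ k i (hi : i < n), n - 1 - i = k →
        (∀ v, D v (CatV.p ⟨i, hi⟩) →
          v = if h : i + 1 < n then CatV.p ⟨i + 1, h⟩ else CatV.r) ∧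
        D (if h : i + 1 < n then CatV.p ⟨i + 1, h⟩ else CatV.r) (CatV.p ⟨i, hi⟩) := by
      intro k
      induction k with
      | zero =>
        intro i hi hk
        have hie : i = n - 1 := by omega
        subst hie
        have hnot : ¬ (n - 1 + 1 < n) := by omega
        rw [dif_neg hnot]
        exact ⟨fun v hv => eq_of_ncard_one (hin1 _) hr v hv, hr⟩
      | succ k ih =>
        intro i hi hk
        have hlt : i + 1 < n := by omega
        obtain ⟨ihu, _⟩ := ih (i + 1) hlt (by omega)
        have hnip : ¬ D (CatV.p ⟨i, hi⟩) (CatV.p ⟨i + 1, hlt⟩) := by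
          intro hDi
          have heq := ihu _ hDi
          by_cases h2 : i + 1 + 1 < n
          · rw [dif_pos h2] at heq
            simp only [CatV.p.injEq, Fin.mk.injEq] at heq
            omega
          · rw [dif_neg h2] at heq
            exact (by cases heq)
        have hadj : catAdj (CatV.p ⟨i, hi⟩) (CatV.p ⟨i + 1, hlt⟩) :=
          Or.inl (by simp [catBase])
        have harc : D (CatV.p ⟨i + 1, hlt⟩) (CatV.p ⟨i, hi⟩) := by
          by_contra hc
          exact hnip ((hD2 _ _ hadj).mpr hc)
        rw [dif_pos hlt]
        exact ⟨fun v hv => eq_of_ncard_one (hin1 _) harc v hv, harc⟩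
    -- the x-arcs are directed away from the spine
    have hx : ∀ i : Fin n, D (CatV.p i) (CatV.x i) := by
      intro i
      obtain ⟨ihu, _⟩ := spine (n - 1 - i) i i.isLt rfl
      have hnx : ¬ D (CatV.x i) (CatV.p ⟨(i : ℕ), i.isLt⟩) := by
        intro hDi
        have heq := ihu _ hDi
        by_cases h2 : (i : ℕ) + 1 < n
        · rw [dif_pos h2] at heq; exact (by cases heq)
        · rw [dif_neg h2] at heq; exact (by cases heq)
      have hadj : catAdj (CatV.p i) (CatV.x i) := Or.inl (by simp [catBase])
      exact (hD2 _ _ hadj).mpr hnx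
    -- every catD-arc is a D-arc
    have forward : ∀ a b : CatV n, catD a b → D a b := by
      intro a b h
      cases a with
      | p j =>
        cases b with
        | p i =>
          have hval : (i : ℕ) + 1 = (j : ℕ) := h
          have hlt : (i : ℕ) + 1 < n := by have := j.isLt; omega
          obtain ⟨_, harc⟩ := spine (n - 1 - i) i i.isLt rfl
          rw [dif_pos hlt] at harc
          have hj : (CatV.p j : CatV n) = CatV.p ⟨(i : ℕ) + 1, hlt⟩ := by
            simp only [CatV.p.injEq, Fin.ext_iff]; omega
          rw [hj]
          exact harc
        | x i => exact h ▸ hx j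
        | li i => exact h ▸ hli j
        | li' i => exact h ▸ hli' j
        | lf =>
          have hval : (j : ℕ) = 0 := h
          have hj : (CatV.p j : CatV n) = CatV.p ⟨0, hn⟩ := by
            simp only [CatV.p.injEq, Fin.ext_iff]; omega
          rw [hj]
          exact hlfarc hn
        | r => exact absurd h (by simp [catD])
      | r =>
        cases b with
        | p i =>
          have hval : (i : ℕ) = n - 1 := h
          have hj : (CatV.p i : CatV n) = CatV.p ⟨n - 1, by omega⟩ := by
            simp only [CatV.p.injEq, Fin.ext_iff]; omega
          rw [hj]
          exact hr
        | x i => exact absurd h (fun h => h)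
        | r => exact absurd h (fun h => h)
        | lf => exact absurd h (fun h => h)
        | li i => exact absurd h (fun h => h)
        | li' i => exact absurd h (fun h => h)
      | x i => cases b <;> exact absurd h (fun h => h)
      | lf => cases b <;> exact absurd h (fun h => h)
      | li i => cases b <;> exact absurd h (fun h => h)
      | li' i => cases b <;> exact absurd h (fun h => h)
    -- conclude equality
    funext a b
    refine propext ⟨fun h => ?_, forward a b⟩
    by_cases hc : catD a b
    · exact hc
    · have hadj := hD1 a b h
      have hba : catD b a := by
        by_contra hba
        exact hc ((catD_isOrientation.2 a b hadj).mpr hba)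
      exact absurd (forward b a hba) ((hD2 a b hadj).mp h)

end PaperFormalization
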